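/- arXiv:2309.16633 — 7 statements merged into one kernel-verified Lean document; each statement's English description precedes it below -/
import Mathlib

section
/- (Theorem 1, first part — positivity of the SupReMix gradient with respect to a negative-pair logit.) For every anchor a ∈ I and every l₀ ∈ J with l₀ ≠ a and ρ(l₀) ≠ ρ(a), the map t ↦ L(s updated so that the (a,l₀)-logit equals t) is differentiable at t = s_{a,l₀}, its derivative equals ((K_a − 1)/k_a) · w(ρ(a), ρ(l₀)) · exp(s_{a,l₀}/τ) / ( τ · Σ_{l ∈ J, l ≠ a} w(ρ(a), ρ(l)) · exp(s_{a,l}/τ) ), and this derivative is strictly positive. -/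
open scoped Classical BigOperators

/-- **Theorem 1, first part (SupReMix gradient positivity).**
For every anchor `a ∈ I` and every `l₀ ∈ J` with `l₀ ≠ a` and `ρ l₀ ≠ ρ a`, the map
`t ↦ L (s updated so that the (a,l₀)-logit equals t)` is differentiable at `t = s (a,l₀)`,
its derivative equals
`((K a − 1)/k a) · w (ρ a) (ρ l₀) · exp(s (a,l₀)/τ) / (τ · Σ_{l ≠ a} w (ρ a) (ρ l) · exp(s (a,l)/τ))`,
and this derivative is strictly positive. -/
theorem supremix_grad_positive
    {J : Type*} [Fintype J] [DecidableEq J]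
    (I : Finset J) (hI : I.Nonempty)
    (ρ : J → ℝ) (mmin mmax : ℝ) (hm : mmin < mmax)
    (τ : ℝ) (hτ : 0 < τ)
    (w : ℝ → ℝ → ℝ) (hw : ∀ m mbar, w m mbar = (1 + |m - mbar|) / (mmax - mmin))
    (k : J → ℕ) (hk : ∀ a, k a = (I.filter (fun b => ρ b = ρ a)).card)
    (P : J → Finset J) (hP : ∀ a j, j ∈ P a ↔ j ≠ a ∧ ρ j = ρ a)
    (K : J → ℕ) (hK : ∀ a, K a = (P a).card + 1)
    (hK2 : ∀ a ∈ I, 2 ≤ K a)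
    (L : (J × J → ℝ) → ℝ)
    (hL : ∀ s : J × J → ℝ, L s = ∑ a ∈ I, (1 / (k a : ℝ)) *
      ∑ j ∈ P a,
        (Real.log (∑ l ∈ Finset.univ.erase a, w (ρ a) (ρ l) * Real.exp (s (a, l) / τ))
          - s (a, j) / τ))
    (s : J × J → ℝ) (a : J) (ha : a ∈ I) (l₀ : J) (hl₀a : l₀ ≠ a) (hρ : ρ l₀ ≠ ρ a) :
    HasDerivAt (fun t => L (Function.update s (a, l₀) t))
      (((K a : ℝ) - 1) / (k a : ℝ) * w (ρ a) (ρ l₀) * Real.exp (s (a, l₀) / τ) /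
        (τ * ∑ l ∈ Finset.univ.erase a, w (ρ a) (ρ l) * Real.exp (s (a, l) / τ)))
      (s (a, l₀))
    ∧ 0 < ((K a : ℝ) - 1) / (k a : ℝ) * w (ρ a) (ρ l₀) * Real.exp (s (a, l₀) / τ) /
        (τ * ∑ l ∈ Finset.univ.erase a, w (ρ a) (ρ l) * Real.exp (s (a, l) / τ)) := by
  classical
  have hwpos : ∀ m mbar, 0 < w m mbar := by
    intro m mbar; rw [hw]
    apply div_pos (by positivity) (by linarith)
  have hl₀mem : l₀ ∈ Finset.univ.erase a := Finset.mem_erase.2 ⟨hl₀a, Finset.mem_univ _⟩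
  set B := ∑ l ∈ (Finset.univ.erase a).erase l₀, w (ρ a) (ρ l) * Real.exp (s (a, l) / τ)
    with hBdef
  have hBnn : 0 ≤ B :=
    Finset.sum_nonneg fun l _ => le_of_lt (mul_pos (hwpos _ _) (Real.exp_pos _))
  have hsplit : ∀ t : ℝ,
      (∑ l ∈ Finset.univ.erase a,
        w (ρ a) (ρ l) * Real.exp (Function.update s (a, l₀) t (a, l) / τ))
      = w (ρ a) (ρ l₀) * Real.exp (t / τ) + B := by
    intro t
    rw [← Finset.add_sum_erase _ _ hl₀mem]
    congr 1
    · rw [Function.update_self]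
    · apply Finset.sum_congr rfl
      intro l hl
      have hne : (a, l) ≠ (a, l₀) := by
        simp only [Finset.mem_erase] at hl
        intro h; exact hl.1 (congrArg Prod.snd h)
      rw [Function.update_of_ne hne]
  have hSfull : (∑ l ∈ Finset.univ.erase a, w (ρ a) (ρ l) * Real.exp (s (a, l) / τ))
      = w (ρ a) (ρ l₀) * Real.exp (s (a, l₀) / τ) + B := by
    have h := hsplit (s (a, l₀))
    rwa [Function.update_eq_self] at h
  have hXpos : ∀ t : ℝ, 0 < w (ρ a) (ρ l₀) * Real.exp (t / τ) + B := fun t =>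
    add_pos_of_pos_of_nonneg (mul_pos (hwpos _ _) (Real.exp_pos _)) hBnn
  set C := (∑ a' ∈ I.erase a, (1 / (k a' : ℝ)) * ∑ j ∈ P a',
      (Real.log (∑ l ∈ Finset.univ.erase a', w (ρ a') (ρ l) * Real.exp (s (a', l) / τ))
        - s (a', j) / τ))
    + (1 / (k a : ℝ)) * ∑ j ∈ P a, (-(s (a, j) / τ)) with hCdef
  have hfun : ∀ t, L (Function.update s (a, l₀) t) =
      ((P a).card : ℝ) / (k a : ℝ) *
        Real.log (w (ρ a) (ρ l₀) * Real.exp (t / τ) + B) + C := by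
    intro t
    rw [hL, ← Finset.add_sum_erase _ _ ha]
    have hrest : (∑ a' ∈ I.erase a, (1 / (k a' : ℝ)) * ∑ j ∈ P a',
        (Real.log (∑ l ∈ Finset.univ.erase a',
            w (ρ a') (ρ l) * Real.exp (Function.update s (a, l₀) t (a', l) / τ))
          - Function.update s (a, l₀) t (a', j) / τ))
        = ∑ a' ∈ I.erase a, (1 / (k a' : ℝ)) * ∑ j ∈ P a',
        (Real.log (∑ l ∈ Finset.univ.erase a',
            w (ρ a') (ρ l) * Real.exp (s (a', l) / τ)) - s (a', j) / τ) := by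
      apply Finset.sum_congr rfl
      intro a' ha'
      have haa : a' ≠ a := (Finset.mem_erase.1 ha').1
      have hup : ∀ x : J, Function.update s (a, l₀) t (a', x) = s (a', x) := by
        intro x
        apply Function.update_of_ne
        intro h; exact haa (congrArg Prod.fst h)
      congr 1
      apply Finset.sum_congr rfl
      intro j _
      rw [hup, Finset.sum_congr rfl (fun l _ => by rw [hup])]
    rw [hrest]
    have hterm : (1 / (k a : ℝ)) * ∑ j ∈ P a,
        (Real.log (∑ l ∈ Finset.univ.erase a,
            w (ρ a) (ρ l) * Real.exp (Function.update s (a, l₀) t (a, l) / τ))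
          - Function.update s (a, l₀) t (a, j) / τ)
        = ((P a).card : ℝ) / (k a : ℝ) *
            Real.log (w (ρ a) (ρ l₀) * Real.exp (t / τ) + B)
          + (1 / (k a : ℝ)) * ∑ j ∈ P a, (-(s (a, j) / τ)) := by
      have hupj : ∀ j ∈ P a, Function.update s (a, l₀) t (a, j) = s (a, j) := by
        intro j hj
        have hj' := (hP a j).1 hj
        apply Function.update_of_ne
        intro h
        have : j = l₀ := congrArg Prod.snd h
        exact hρ (this ▸ hj'.2)
      rw [Finset.sum_congr rfl (fun j hj => by rw [hsplit, hupj j hj])]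
      rw [Finset.sum_sub_distrib, Finset.sum_const, nsmul_eq_mul]
      rw [show (∑ j ∈ P a, (-(s (a, j) / τ))) = -∑ j ∈ P a, s (a, j) / τ by
        rw [Finset.sum_neg_distrib]]
      ring
    rw [hterm, hCdef]
    ring
  set D := ((P a).card : ℝ) / (k a : ℝ) with hDdef
  have hinner : HasDerivAt (fun t => w (ρ a) (ρ l₀) * Real.exp (t / τ) + B)
      (w (ρ a) (ρ l₀) * (Real.exp (s (a, l₀) / τ) * (1 / τ))) (s (a, l₀)) := by
    have h := (((hasDerivAt_id (s (a, l₀))).div_const τ).exp).const_mul (w (ρ a) (ρ l₀))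
    simpa using h.add_const B
  have hXne : w (ρ a) (ρ l₀) * Real.exp (s (a, l₀) / τ) + B ≠ 0 := ne_of_gt (hXpos _)
  have hlog := (hinner.log hXne).const_mul D
  have hderiv : HasDerivAt (fun t => L (Function.update s (a, l₀) t))
      (D * (w (ρ a) (ρ l₀) * (Real.exp (s (a, l₀) / τ) * (1 / τ)) /
        (w (ρ a) (ρ l₀) * Real.exp (s (a, l₀) / τ) + B))) (s (a, l₀)) := by
    have h := hlog.add_const C
    refine HasDerivAt.congr_of_eventuallyEq h (Filter.Eventually.of_forall ?_)
    intro t; exact hfun t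
  have hkpos : 0 < (k a : ℝ) := by
    have : a ∈ I.filter (fun b => ρ b = ρ a) := Finset.mem_filter.2 ⟨ha, rfl⟩
    have hc : 0 < (I.filter (fun b => ρ b = ρ a)).card := Finset.card_pos.2 ⟨a, this⟩
    rw [hk]; exact_mod_cast hc
  have hKcast : ((K a : ℝ) - 1) = ((P a).card : ℝ) := by
    rw [hK]; push_cast; ring
  have hSpos : 0 < ∑ l ∈ Finset.univ.erase a, w (ρ a) (ρ l) * Real.exp (s (a, l) / τ) := by
    rw [hSfull]; exact hXpos _
  have hτne : τ ≠ 0 := ne_of_gt hτ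
  have heq : D * (w (ρ a) (ρ l₀) * (Real.exp (s (a, l₀) / τ) * (1 / τ)) /
        (w (ρ a) (ρ l₀) * Real.exp (s (a, l₀) / τ) + B))
      = ((K a : ℝ) - 1) / (k a : ℝ) * w (ρ a) (ρ l₀) * Real.exp (s (a, l₀) / τ) /
        (τ * ∑ l ∈ Finset.univ.erase a, w (ρ a) (ρ l) * Real.exp (s (a, l) / τ)) := by
    rw [hSfull, hKcast, hDdef]
    field_simp
  constructor
  · rw [← heq]; exact hderiv
  · rw [← heq]
    have hPpos : 0 < ((P a).card : ℝ) := by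
      have h2 := hK2 a ha
      rw [hK] at h2
      have : 1 ≤ (P a).card := by omega
      exact_mod_cast Nat.lt_of_lt_of_le Nat.zero_lt_one this
    apply mul_pos (div_pos hPpos hkpos)
    exact div_pos (mul_pos (hwpos _ _) (mul_pos (Real.exp_pos _) (by positivity))) (hXpos _)
end

section
/- (Theorem 1 — distance magnifying.) Fix an anchor a ∈ I and two contrast elements l, l' ∈ J \ {a} with ρ(l) ≠ ρ(a), ρ(l') ≠ ρ(a), and |ρ(a) − ρ(l)| > |ρ(a) − ρ(l')|. For t ∈ {0,1} let ∇₁(t) and ∇₂(t) denote the partial derivatives of L_t with respect to the logits s_{a,l} and s_{a,l'} respectively. Then for each t ∈ {0,1} both ∇₁(t) > 0 and ∇₂(t) > 0, the ratio satisfies ∇₁(t)/∇₂(t) = ((1 + t·|ρ(a) − ρ(l)|)/(1 + t·|ρ(a) − ρ(l')|)) · exp((s_{a,l} − s_{a,l'})/τ), and consequently ∇₁(1)/∇₂(1) > ∇₁(0)/∇₂(0); that is, the weighted loss magnifies the gradient ratio of the farther negative pair relative to the nearer one compared with the unweighted loss. -/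
open scoped Classical BigOperators

set_option maxHeartbeats 2000000

/-- **Theorem 1 (Distance Magnifying).**
For an anchor `a ∈ I` and contrast elements `l, l' ≠ a` with `ρ l ≠ ρ a`, `ρ l' ≠ ρ a` and
`|ρ a − ρ l| > |ρ a − ρ l'|`, letting `D₁ t`, `D₂ t` be the partial derivatives of the loss
`L t` (with weights `w_t(m,m̄) = (1 + t·|m − m̄|)/(m_max − m_min)`) with respect to the logits
`s (a,l)` and `s (a,l')`, for `t ∈ {0,1}` both derivatives are positive, the ratio satisfies
`D₁ t / D₂ t = ((1 + t·|ρ a − ρ l|)/(1 + t·|ρ a − ρ l'|)) · exp((s(a,l) − s(a,l'))/τ)`,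
and consequently `D₁ 1 / D₂ 1 > D₁ 0 / D₂ 0`. -/
theorem supremix_distance_magnifying
    {J : Type*} [Fintype J] [DecidableEq J]
    (I : Finset J) (hI : I.Nonempty)
    (ρ : J → ℝ) (mmin mmax : ℝ) (hm : mmin < mmax)
    (τ : ℝ) (hτ : 0 < τ)
    (w : ℝ → ℝ → ℝ → ℝ)
    (hw : ∀ t m mbar, w t m mbar = (1 + t * |m - mbar|) / (mmax - mmin))
    (k : J → ℕ) (hk : ∀ a, k a = (I.filter (fun b => ρ b = ρ a)).card)
    (P : J → Finset J) (hP : ∀ a j, j ∈ P a ↔ j ≠ a ∧ ρ j = ρ a)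
    (K : J → ℕ) (hK : ∀ a, K a = (P a).card + 1)
    (hK2 : ∀ a ∈ I, 2 ≤ K a)
    (L : ℝ → (J × J → ℝ) → ℝ)
    (hL : ∀ (t : ℝ) (s : J × J → ℝ), L t s = ∑ a ∈ I, (1 / (k a : ℝ)) *
      ∑ j ∈ P a,
        (Real.log (∑ l ∈ Finset.univ.erase a, w t (ρ a) (ρ l) * Real.exp (s (a, l) / τ))
          - s (a, j) / τ))
    (s : J × J → ℝ) (a : J) (ha : a ∈ I)
    (l l' : J) (hla : l ≠ a) (hl'a : l' ≠ a)
    (hρl : ρ l ≠ ρ a) (hρl' : ρ l' ≠ ρ a)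
    (hfar : |ρ a - ρ l'| < |ρ a - ρ l|)
    (D₁ D₂ : ℝ → ℝ)
    (hD₁ : ∀ t ∈ ({0, 1} : Set ℝ),
      HasDerivAt (fun u => L t (Function.update s (a, l) u)) (D₁ t) (s (a, l)))
    (hD₂ : ∀ t ∈ ({0, 1} : Set ℝ),
      HasDerivAt (fun u => L t (Function.update s (a, l') u)) (D₂ t) (s (a, l'))) :
    (∀ t ∈ ({0, 1} : Set ℝ), 0 < D₁ t ∧ 0 < D₂ t ∧
      D₁ t / D₂ t = ((1 + t * |ρ a - ρ l|) / (1 + t * |ρ a - ρ l'|)) *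
        Real.exp ((s (a, l) - s (a, l')) / τ))
    ∧ D₁ 0 / D₂ 0 < D₁ 1 / D₂ 1 := by
  have hmm : (0:ℝ) < mmax - mmin := sub_pos.2 hm
  set S : ℝ → ℝ := fun t => ∑ x ∈ Finset.univ.erase a,
      w t (ρ a) (ρ x) * Real.exp (s (a, x) / τ) with hSdef
  have hwpos : ∀ t : ℝ, 0 ≤ t → ∀ m mbar, 0 < w t m mbar := by
    intro t ht m mbar
    rw [hw]
    apply div_pos _ hmm
    have : 0 ≤ t * |m - mbar| := mul_nonneg ht (abs_nonneg _)
    linarith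
  have hSpos : ∀ t : ℝ, 0 ≤ t → 0 < S t := by
    intro t ht
    apply Finset.sum_pos
    · intro x _; exact mul_pos (hwpos t ht _ _) (Real.exp_pos _)
    · exact ⟨l, Finset.mem_erase.2 ⟨hla, Finset.mem_univ l⟩⟩
  have hcard : 1 ≤ (P a).card := by
    have := hK2 a ha; rw [hK] at this; omega
  have hka : 1 ≤ k a := by
    rw [hk]; exact Finset.card_pos.2 ⟨a, Finset.mem_filter.2 ⟨ha, rfl⟩⟩
  set c : ℝ := ((P a).card : ℝ) / (k a : ℝ) with hcdef
  have hcpos : 0 < c := div_pos (by exact_mod_cast hcard) (by exact_mod_cast hka)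
  -- the key derivative computation
  have key : ∀ t : ℝ, 0 ≤ t → ∀ b : J, b ≠ a → ρ b ≠ ρ a →
      HasDerivAt (fun u => L t (Function.update s (a, b) u))
        (c * (w t (ρ a) (ρ b) * Real.exp (s (a, b) / τ)) / (τ * S t)) (s (a, b)) := by
    intro t ht b hba hρb
    have hbmem : b ∈ Finset.univ.erase a := Finset.mem_erase.2 ⟨hba, Finset.mem_univ b⟩
    set C : ℝ := ∑ x ∈ (Finset.univ.erase a).erase b,
        w t (ρ a) (ρ x) * Real.exp (s (a, x) / τ) with hCdef
    have hCnonneg : 0 ≤ C := by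
      apply Finset.sum_nonneg
      intro x _
      exact le_of_lt (mul_pos (hwpos t ht _ _) (Real.exp_pos _))
    have hSsplit : S t = w t (ρ a) (ρ b) * Real.exp (s (a, b) / τ) + C := by
      rw [hSdef, hCdef]
      exact (Finset.add_sum_erase _ _ hbmem).symm
    -- rewrite the function explicitly
    have hfun : ∀ u, L t (Function.update s (a, b) u) =
        (∑ a' ∈ I.erase a, (1 / (k a' : ℝ)) * ∑ j ∈ P a',
          (Real.log (∑ x ∈ Finset.univ.erase a',
              w t (ρ a') (ρ x) * Real.exp (s (a', x) / τ)) - s (a', j) / τ))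
        + (1 / (k a : ℝ)) * (((P a).card : ℝ) *
            Real.log (w t (ρ a) (ρ b) * Real.exp (u / τ) + C)
          - ∑ j ∈ P a, s (a, j) / τ) := by
      intro u
      rw [hL, ← Finset.add_sum_erase _ _ ha, add_comm]
      congr 1
      · apply Finset.sum_congr rfl
        intro a' ha'
        have ha'ne : a' ≠ a := (Finset.mem_erase.1 ha').1
        congr 1
        apply Finset.sum_congr rfl
        intro j _
        have h1 : Function.update s (a, b) u (a', j) = s (a', j) :=
          Function.update_of_ne (by simp [ha'ne]) _ _
        rw [h1]
        congr 2
        apply Finset.sum_congr rfl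
        intro x _
        rw [Function.update_of_ne (by simp [ha'ne]) _ _]
      · have hinner : ∀ j ∈ P a,
            (Real.log (∑ x ∈ Finset.univ.erase a,
                w t (ρ a) (ρ x) * Real.exp (Function.update s (a, b) u (a, x) / τ))
              - Function.update s (a, b) u (a, j) / τ)
            = Real.log (w t (ρ a) (ρ b) * Real.exp (u / τ) + C) - s (a, j) / τ := by
          intro j hj
          have hjb : j ≠ b := by
            intro h; subst h; exact hρb ((hP a j).1 hj).2
          have h1 : Function.update s (a, b) u (a, j) = s (a, j) :=
            Function.update_of_ne (by simp [hjb]) _ _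
          rw [h1]
          congr 2
          rw [← Finset.add_sum_erase _ _ hbmem, Function.update_self]
          congr 1
          apply Finset.sum_congr rfl
          intro x hx
          rw [Function.update_of_ne (by simp [(Finset.mem_erase.1 hx).1]) _ _]
        rw [Finset.sum_congr rfl hinner, Finset.sum_sub_distrib, Finset.sum_const,
          nsmul_eq_mul]
    -- now compute the derivative of the explicit formula
    set u₀ := s (a, b) with hu₀
    have hG : 0 < w t (ρ a) (ρ b) * Real.exp (u₀ / τ) + C := by
      rw [← hSsplit]; exact hSpos t ht
    have h1 : HasDerivAt (fun u : ℝ => w t (ρ a) (ρ b) * Real.exp (u / τ) + C)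
        (w t (ρ a) (ρ b) * (Real.exp (u₀ / τ) * (1 / τ))) u₀ := by
      have hdiv : HasDerivAt (fun u : ℝ => u / τ) (1 / τ) u₀ := by
        simpa using (hasDerivAt_id u₀).div_const τ
      have hexp : HasDerivAt (fun u : ℝ => Real.exp (u / τ))
          (Real.exp (u₀ / τ) * (1 / τ)) u₀ :=
        (Real.hasDerivAt_exp (u₀ / τ)).comp (h₂ := Real.exp) u₀ hdiv
      exact (hexp.const_mul _).add_const C
    have h2 : HasDerivAt (fun u : ℝ =>
        Real.log (w t (ρ a) (ρ b) * Real.exp (u / τ) + C))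
        (w t (ρ a) (ρ b) * (Real.exp (u₀ / τ) * (1 / τ)) /
          (w t (ρ a) (ρ b) * Real.exp (u₀ / τ) + C)) u₀ :=
      h1.log hG.ne'
    have h3 : HasDerivAt (fun u : ℝ =>
        (∑ a' ∈ I.erase a, (1 / (k a' : ℝ)) * ∑ j ∈ P a',
          (Real.log (∑ x ∈ Finset.univ.erase a',
              w t (ρ a') (ρ x) * Real.exp (s (a', x) / τ)) - s (a', j) / τ))
        + (1 / (k a : ℝ)) * (((P a).card : ℝ) *
            Real.log (w t (ρ a) (ρ b) * Real.exp (u / τ) + C)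
          - ∑ j ∈ P a, s (a, j) / τ))
        ((1 / (k a : ℝ)) * (((P a).card : ℝ) *
          (w t (ρ a) (ρ b) * (Real.exp (u₀ / τ) * (1 / τ)) /
            (w t (ρ a) (ρ b) * Real.exp (u₀ / τ) + C)))) u₀ := by
      simpa only [zero_add, Pi.add_def] using (hasDerivAt_const u₀
          (∑ a' ∈ I.erase a, (1 / (k a' : ℝ)) * ∑ j ∈ P a',
            (Real.log (∑ x ∈ Finset.univ.erase a',
                w t (ρ a') (ρ x) * Real.exp (s (a', x) / τ)) - s (a', j) / τ))).add
        ((((h2.const_mul (((P a).card : ℝ))).sub_const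
            (∑ j ∈ P a, s (a, j) / τ)).const_mul (1 / (k a : ℝ))))
    have heq : (fun u => L t (Function.update s (a, b) u)) = (fun u : ℝ =>
        (∑ a' ∈ I.erase a, (1 / (k a' : ℝ)) * ∑ j ∈ P a',
          (Real.log (∑ x ∈ Finset.univ.erase a',
              w t (ρ a') (ρ x) * Real.exp (s (a', x) / τ)) - s (a', j) / τ))
        + (1 / (k a : ℝ)) * (((P a).card : ℝ) *
            Real.log (w t (ρ a) (ρ b) * Real.exp (u / τ) + C)
          - ∑ j ∈ P a, s (a, j) / τ)) := funext hfun
    rw [heq]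
    convert h3 using 1
    rw [← hSsplit, hcdef]
    have hkne : ((k a : ℝ)) ≠ 0 := by positivity
    have hτne : τ ≠ 0 := ne_of_gt hτ
    have hSne : S t ≠ 0 := ne_of_gt (hSpos t ht)
    field_simp
  -- formulas for D₁ and D₂
  have hform : ∀ t ∈ ({0, 1} : Set ℝ), 0 ≤ t ∧
      D₁ t = c * (w t (ρ a) (ρ l) * Real.exp (s (a, l) / τ)) / (τ * S t) ∧
      D₂ t = c * (w t (ρ a) (ρ l') * Real.exp (s (a, l') / τ)) / (τ * S t) := by
    intro t htmem
    have ht : 0 ≤ t := by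
      rcases htmem with h | h <;> simp_all <;> norm_num
    exact ⟨ht, (hD₁ t htmem).unique (key t ht l hla hρl),
      (hD₂ t htmem).unique (key t ht l' hl'a hρl')⟩
  have hratio : ∀ t ∈ ({0, 1} : Set ℝ), 0 < D₁ t ∧ 0 < D₂ t ∧
      D₁ t / D₂ t = ((1 + t * |ρ a - ρ l|) / (1 + t * |ρ a - ρ l'|)) *
        Real.exp ((s (a, l) - s (a, l')) / τ) := by
    intro t htmem
    obtain ⟨ht, h1, h2⟩ := hform t htmem
    have hw1 : 0 < w t (ρ a) (ρ l) := hwpos t ht _ _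
    have hw2 : 0 < w t (ρ a) (ρ l') := hwpos t ht _ _
    have hSp := hSpos t ht
    have hD1pos : 0 < D₁ t := by
      rw [h1]; positivity
    have hD2pos : 0 < D₂ t := by
      rw [h2]; positivity
    refine ⟨hD1pos, hD2pos, ?_⟩
    rw [h1, h2, hw, hw]
    have hpos1 : (0:ℝ) < 1 + t * |ρ a - ρ l| := by
      have : 0 ≤ t * |ρ a - ρ l| := mul_nonneg ht (abs_nonneg _); linarith
    have hpos2 : (0:ℝ) < 1 + t * |ρ a - ρ l'| := by
      have : 0 ≤ t * |ρ a - ρ l'| := mul_nonneg ht (abs_nonneg _); linarith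
    rw [sub_div, Real.exp_sub]
    field_simp
  refine ⟨hratio, ?_⟩
  have h0 := (hratio 0 (by simp)).2.2
  have h1 := (hratio 1 (by simp)).2.2
  rw [h0, h1]
  simp only [zero_mul, one_mul, add_zero, div_one]
  have habs : 0 ≤ |ρ a - ρ l'| := abs_nonneg _
  have hgt : 1 < (1 + |ρ a - ρ l|) / (1 + |ρ a - ρ l'|) := by
    rw [lt_div_iff₀ (by linarith)]
    linarith
  have hE : 0 < Real.exp ((s (a, l) - s (a, l')) / τ) := Real.exp_pos _
  nlinarith
end

section
/- (Consequence of distance magnifying: farther negatives are penalized more at equal similarity.) Fix an anchor a ∈ I and two contrast elements l, l' ∈ J \ {a} with ρ(l) ≠ ρ(a), ρ(l') ≠ ρ(a), and |ρ(a) − ρ(l)| > |ρ(a) − ρ(l')|. If the logits are equal, s_{a,l} = s_{a,l'}, then the partial derivative of the SupReMix loss L with respect to s_{a,l} is strictly greater than its partial derivative with respect to s_{a,l'}. -/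
open scoped Classical BigOperators

/-- **Consequence of distance magnifying: farther negatives are penalized more at equal
similarity.** For an anchor `a ∈ I` and contrast elements `l, l' ≠ a` with `ρ l ≠ ρ a`,
`ρ l' ≠ ρ a` and `|ρ a − ρ l| > |ρ a − ρ l'|`, if the logits are equal, `s (a,l) = s (a,l')`,
then the partial derivative of the SupReMix loss with respect to `s (a,l)` is strictly greater
than its partial derivative with respect to `s (a,l')`. -/
theorem supremix_farther_negative_larger_gradient
    {J : Type*} [Fintype J] [DecidableEq J]
    (I : Finset J) (hI : I.Nonempty)
    (ρ : J → ℝ) (mmin mmax : ℝ) (hm : mmin < mmax)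
    (τ : ℝ) (hτ : 0 < τ)
    (w : ℝ → ℝ → ℝ) (hw : ∀ m mbar, w m mbar = (1 + |m - mbar|) / (mmax - mmin))
    (k : J → ℕ) (hk : ∀ a, k a = (I.filter (fun b => ρ b = ρ a)).card)
    (P : J → Finset J) (hP : ∀ a j, j ∈ P a ↔ j ≠ a ∧ ρ j = ρ a)
    (K : J → ℕ) (hK : ∀ a, K a = (P a).card + 1)
    (hK2 : ∀ a ∈ I, 2 ≤ K a)
    (L : (J × J → ℝ) → ℝ)
    (hL : ∀ s : J × J → ℝ, L s = ∑ a ∈ I, (1 / (k a : ℝ)) *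
      ∑ j ∈ P a,
        (Real.log (∑ l ∈ Finset.univ.erase a, w (ρ a) (ρ l) * Real.exp (s (a, l) / τ))
          - s (a, j) / τ))
    (s : J × J → ℝ) (a : J) (ha : a ∈ I)
    (l l' : J) (hla : l ≠ a) (hl'a : l' ≠ a)
    (hρl : ρ l ≠ ρ a) (hρl' : ρ l' ≠ ρ a)
    (hfar : |ρ a - ρ l'| < |ρ a - ρ l|)
    (heq : s (a, l) = s (a, l'))
    (D₁ D₂ : ℝ)
    (hD₁ : HasDerivAt (fun u => L (Function.update s (a, l) u)) D₁ (s (a, l)))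
    (hD₂ : HasDerivAt (fun u => L (Function.update s (a, l') u)) D₂ (s (a, l'))) :
    D₂ < D₁ := by
  classical
  have hden : (0:ℝ) < mmax - mmin := sub_pos.2 hm
  have hwpos : ∀ m mbar, 0 < w m mbar := by
    intro m mbar; rw [hw]; positivity
  have hka : 0 < (k a : ℝ) := by
    have h1 : a ∈ I.filter (fun b => ρ b = ρ a) := Finset.mem_filter.2 ⟨ha, rfl⟩
    have h2 : 0 < (I.filter (fun b => ρ b = ρ a)).card := Finset.card_pos.2 ⟨a, h1⟩
    rw [hk]; exact_mod_cast h2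
  have hPcard : 0 < ((P a).card : ℝ) := by
    have h1 := hK2 a ha
    rw [hK a] at h1
    have h2 : 1 ≤ (P a).card := by omega
    exact_mod_cast h2
  set Z : ℝ := ∑ m ∈ Finset.univ.erase a, w (ρ a) (ρ m) * Real.exp (s (a, m) / τ) with hZdef
  have hZpos : 0 < Z := by
    apply Finset.sum_pos
    · intro m _; exact mul_pos (hwpos _ _) (Real.exp_pos _)
    · exact ⟨l, Finset.mem_erase.2 ⟨hla, Finset.mem_univ l⟩⟩
  set c : ℝ := ((P a).card : ℝ) / (k a : ℝ) with hcdef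
  have hcpos : 0 < c := div_pos hPcard hka
  have key : ∀ x : J, x ≠ a → ρ x ≠ ρ a →
      HasDerivAt (fun u => L (Function.update s (a, x) u))
        (c * (w (ρ a) (ρ x) * Real.exp (s (a, x) / τ) / τ / Z)) (s (a, x)) := by
    intro x hxa hρx
    have hxmem : x ∈ Finset.univ.erase a := Finset.mem_erase.2 ⟨hxa, Finset.mem_univ x⟩
    set R : ℝ := ∑ m ∈ (Finset.univ.erase a).erase x,
      w (ρ a) (ρ m) * Real.exp (s (a, m) / τ) with hRdef
    have hRnonneg : 0 ≤ R :=
      Finset.sum_nonneg fun m _ => le_of_lt (mul_pos (hwpos _ _) (Real.exp_pos _))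
    have hZR : Z = w (ρ a) (ρ x) * Real.exp (s (a, x) / τ) + R := by
      rw [hZdef, ← Finset.add_sum_erase _ _ hxmem]
    have hfun : ∀ u, L (Function.update s (a, x) u) =
        (1 / (k a : ℝ)) * ∑ j ∈ P a,
          (Real.log (w (ρ a) (ρ x) * Real.exp (u / τ) + R) - s (a, j) / τ)
        + ∑ a' ∈ I.erase a, (1 / (k a' : ℝ)) * ∑ j ∈ P a',
          (Real.log (∑ m ∈ Finset.univ.erase a',
              w (ρ a') (ρ m) * Real.exp (s (a', m) / τ))
            - s (a', j) / τ) := by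
      intro u
      rw [hL, ← Finset.add_sum_erase _ _ ha]
      have hpart1 : ∑ j ∈ P a,
          (Real.log (∑ m ∈ Finset.univ.erase a,
              w (ρ a) (ρ m) * Real.exp (Function.update s (a, x) u (a, m) / τ))
            - Function.update s (a, x) u (a, j) / τ)
          = ∑ j ∈ P a,
          (Real.log (w (ρ a) (ρ x) * Real.exp (u / τ) + R) - s (a, j) / τ) := by
        refine Finset.sum_congr rfl fun j hj => ?_
        obtain ⟨hja, hjρ⟩ := (hP a j).1 hj
        have hjx : (a, j) ≠ (a, x) := fun h =>
          hρx ((show j = x from congrArg Prod.snd h) ▸ hjρ)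
        have hlogarg : ∑ m ∈ Finset.univ.erase a,
            w (ρ a) (ρ m) * Real.exp (Function.update s (a, x) u (a, m) / τ)
            = w (ρ a) (ρ x) * Real.exp (u / τ) + R := by
          rw [← Finset.add_sum_erase _ _ hxmem, Function.update_self]
          refine congrArg _ (Finset.sum_congr rfl fun m hm' => ?_)
          have hmx : (a, m) ≠ (a, x) :=
            fun h => (Finset.mem_erase.1 hm').1 (congrArg Prod.snd h)
          rw [Function.update_of_ne hmx]
        rw [hlogarg, Function.update_of_ne hjx]
      rw [hpart1]
      refine congrArg _ (Finset.sum_congr rfl fun a' ha' => ?_)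
      have haa : a' ≠ a := (Finset.mem_erase.1 ha').1
      refine congrArg _ (Finset.sum_congr rfl fun j _ => ?_)
      have h2 : ∑ m ∈ Finset.univ.erase a',
          w (ρ a') (ρ m) * Real.exp (Function.update s (a, x) u (a', m) / τ)
          = ∑ m ∈ Finset.univ.erase a',
          w (ρ a') (ρ m) * Real.exp (s (a', m) / τ) :=
        Finset.sum_congr rfl fun m _ => by
          rw [Function.update_of_ne (fun h => haa (congrArg Prod.fst h))]
      rw [h2, Function.update_of_ne (fun h => haa (congrArg Prod.fst h))]
    set u₀ := s (a, x) with hu₀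
    have hWpos : 0 < w (ρ a) (ρ x) * Real.exp (u₀ / τ) + R := by
      have := mul_pos (hwpos (ρ a) (ρ x)) (Real.exp_pos (u₀ / τ))
      linarith
    have hinner : HasDerivAt (fun u => w (ρ a) (ρ x) * Real.exp (u / τ) + R)
        (w (ρ a) (ρ x) * (Real.exp (u₀ / τ) * (1 / τ))) u₀ := by
      have h1 : HasDerivAt (fun u : ℝ => u / τ) (1 / τ) u₀ := by
        simpa using (hasDerivAt_id u₀).div_const τ
      exact ((h1.exp).const_mul _).add_const R
    have hlog : HasDerivAt (fun u => Real.log (w (ρ a) (ρ x) * Real.exp (u / τ) + R))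
        (w (ρ a) (ρ x) * (Real.exp (u₀ / τ) * (1 / τ)) /
          (w (ρ a) (ρ x) * Real.exp (u₀ / τ) + R)) u₀ :=
      hinner.log (ne_of_gt hWpos)
    have hsum : HasDerivAt (fun u => ∑ j ∈ P a,
        (Real.log (w (ρ a) (ρ x) * Real.exp (u / τ) + R) - s (a, j) / τ))
        (((P a).card : ℝ) * (w (ρ a) (ρ x) * (Real.exp (u₀ / τ) * (1 / τ)) /
          (w (ρ a) (ρ x) * Real.exp (u₀ / τ) + R))) u₀ := by
      have h : HasDerivAt (fun u => ∑ j ∈ P a,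
          (Real.log (w (ρ a) (ρ x) * Real.exp (u / τ) + R) - s (a, j) / τ))
          (∑ _j ∈ P a, w (ρ a) (ρ x) * (Real.exp (u₀ / τ) * (1 / τ)) /
            (w (ρ a) (ρ x) * Real.exp (u₀ / τ) + R)) u₀ :=
        HasDerivAt.fun_sum fun j _ => hlog.sub_const _
      simpa [Finset.sum_const, nsmul_eq_mul] using h
    have heqfun : (fun u => L (Function.update s (a, x) u)) =
        fun u => (1 / (k a : ℝ)) * ∑ j ∈ P a,
          (Real.log (w (ρ a) (ρ x) * Real.exp (u / τ) + R) - s (a, j) / τ)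
        + ∑ a' ∈ I.erase a, (1 / (k a' : ℝ)) * ∑ j ∈ P a',
          (Real.log (∑ m ∈ Finset.univ.erase a',
              w (ρ a') (ρ m) * Real.exp (s (a', m) / τ))
            - s (a', j) / τ) := funext hfun
    rw [heqfun]
    have hmain := (hsum.const_mul (1 / (k a : ℝ))).add_const
      (∑ a' ∈ I.erase a, (1 / (k a' : ℝ)) * ∑ j ∈ P a',
        (Real.log (∑ m ∈ Finset.univ.erase a',
            w (ρ a') (ρ m) * Real.exp (s (a', m) / τ))
          - s (a', j) / τ))
    convert hmain using 1
    · rfl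
    · rfl
    rw [hZR, hcdef]
    ring
  have hDl := hD₁.unique (key l hla hρl)
  have hDl' := hD₂.unique (key l' hl'a hρl')
  rw [hDl, hDl', heq]
  have hwlt : w (ρ a) (ρ l') < w (ρ a) (ρ l) := by
    rw [hw, hw]
    have h0 : (0:ℝ) ≤ |ρ a - ρ l'| := abs_nonneg _
    gcongr <;> first | exact hden | exact hfar | linarith
  have hE : 0 < Real.exp (s (a, l') / τ) := Real.exp_pos _
  gcongr
end

section
/- (Lemma 1 — lower bound for the SupReMix loss.) For every choice of unit-norm embeddings z : J → ℝ^d and every temperature τ > 0, the SupReMix loss satisfies L ≥ L*, where L* = Σ_{a ∈ I} (1/k_a)·(K_a − 1)·log( (K_a − 1)/(m_max − m_min) ). -/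
open scoped Classical BigOperators RealInnerProductSpace

/-- **Lemma 1 (Lower bound for the SupReMix loss).**
For every choice of unit-norm embeddings `z : J → ℝ^d` and every temperature `τ > 0`,
the SupReMix loss satisfies `L ≥ L*`, where
`L* = Σ_{a ∈ I} (1/k_a)·(K_a − 1)·log((K_a − 1)/(m_max − m_min))`. -/
theorem supremix_lower_bound
    {J : Type*} [Fintype J] [DecidableEq J] {d : ℕ}
    (I : Finset J) (hI : I.Nonempty)
    (ρ : J → ℝ) (mmin mmax : ℝ) (hm : mmin < mmax)
    (τ : ℝ) (hτ : 0 < τ)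
    (z : J → EuclideanSpace ℝ (Fin d)) (hz : ∀ b, ‖z b‖ = 1)
    (w : ℝ → ℝ → ℝ) (hw : ∀ m mbar, w m mbar = (1 + |m - mbar|) / (mmax - mmin))
    (k : J → ℕ) (hk : ∀ a, k a = (I.filter (fun b => ρ b = ρ a)).card)
    (P : J → Finset J) (hP : ∀ a j, j ∈ P a ↔ j ≠ a ∧ ρ j = ρ a)
    (K : J → ℕ) (hK : ∀ a, K a = (P a).card + 1)
    (hK2 : ∀ a ∈ I, 2 ≤ K a)
    (L : ℝ)
    (hL : L = ∑ a ∈ I, (1 / (k a : ℝ)) *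
      ∑ j ∈ P a,
        (Real.log (∑ l ∈ Finset.univ.erase a,
            w (ρ a) (ρ l) * Real.exp (⟪z a, z l⟫ / τ))
          - ⟪z a, z j⟫ / τ))
    (Lstar : ℝ)
    (hLstar : Lstar = ∑ a ∈ I, (1 / (k a : ℝ)) * ((K a : ℝ) - 1) *
      Real.log (((K a : ℝ) - 1) / (mmax - mmin))) :
    Lstar ≤ L := by
  have hM : (0:ℝ) < mmax - mmin := sub_pos.mpr hm
  subst hL hLstar
  apply Finset.sum_le_sum
  intro a ha
  have hk0 : (0:ℝ) ≤ 1 / (k a : ℝ) := by positivity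
  rw [mul_assoc]
  refine mul_le_mul_of_nonneg_left ?_ hk0
  set s : J → ℝ := fun l => ⟪z a, z l⟫ / τ with hs
  set n : ℕ := (P a).card with hn
  have hn1 : 1 ≤ n := by
    have := hK2 a ha
    rw [hK a] at this
    omega
  have hn0 : (0:ℝ) < (n : ℝ) := by exact_mod_cast hn1
  have hKcast : (K a : ℝ) - 1 = (n : ℝ) := by rw [hK]; push_cast; ring
  rw [hKcast]
  set T : ℝ := ∑ l ∈ P a, Real.exp (s l) with hT
  have hPne : (P a).Nonempty := Finset.card_pos.mp hn1
  have hTpos : 0 < T := Finset.sum_pos (fun l _ => Real.exp_pos _) hPne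
  -- Step 1: the full weighted sum is at least T / (mmax - mmin)
  set S : ℝ := ∑ l ∈ Finset.univ.erase a, w (ρ a) (ρ l) * Real.exp (s l) with hSdef
  have hsub : P a ⊆ Finset.univ.erase a := by
    intro j hj
    exact Finset.mem_erase.mpr ⟨((hP a j).mp hj).1, Finset.mem_univ j⟩
  have hS : T / (mmax - mmin) ≤ S := by
    have h1 : T / (mmax - mmin) = ∑ l ∈ P a, w (ρ a) (ρ l) * Real.exp (s l) := by
      rw [hT, Finset.sum_div]
      refine Finset.sum_congr rfl fun l hl => ?_
      have hρ : ρ l = ρ a := ((hP a l).mp hl).2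
      rw [hw, hρ, sub_self, abs_zero]
      ring
    rw [h1, hSdef]
    refine Finset.sum_le_sum_of_subset_of_nonneg hsub fun l _ _ => ?_
    have hw0 : 0 ≤ w (ρ a) (ρ l) := by
      rw [hw]
      have : (0:ℝ) ≤ 1 + |ρ a - ρ l| := by positivity
      positivity
    exact mul_nonneg hw0 (Real.exp_pos _).le
  -- Step 2: AM-GM : exp of average ≤ average of exp
  have hamgm : Real.exp ((∑ l ∈ P a, s l) / n) ≤ T / n := by
    have := Real.geom_mean_le_arith_mean_weighted (P a) (fun _ => 1 / (n:ℝ))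
      (fun l => Real.exp (s l)) (fun i _ => by positivity)
      (by rw [Finset.sum_const, hn, nsmul_eq_mul]; exact mul_one_div_cancel hn0.ne') (fun i _ => (Real.exp_pos _).le)
    calc Real.exp ((∑ l ∈ P a, s l) / n)
        = ∏ l ∈ P a, (Real.exp (s l)) ^ ((1:ℝ)/n) := by
          simp only [← Real.exp_mul, ← Real.exp_sum]
          congr 1
          rw [Finset.sum_div]
          exact Finset.sum_congr rfl fun l _ => by ring
      _ ≤ ∑ i ∈ P a, (1/(n:ℝ)) * Real.exp (s i) := this
      _ = T / n := by
          rw [hT, Finset.sum_div]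
          exact Finset.sum_congr rfl fun l _ => by ring
  have hlogT : Real.log (n : ℝ) + (∑ l ∈ P a, s l) / n ≤ Real.log T := by
    have h2 : (n : ℝ) * Real.exp ((∑ l ∈ P a, s l) / n) ≤ T := by
      have := (le_div_iff₀ hn0).mp hamgm
      linarith
    calc Real.log (n : ℝ) + (∑ l ∈ P a, s l) / n
        = Real.log ((n:ℝ) * Real.exp ((∑ l ∈ P a, s l) / n)) := by
          rw [Real.log_mul (ne_of_gt hn0) (Real.exp_ne_zero _), Real.log_exp]
      _ ≤ Real.log T := Real.log_le_log (by positivity) h2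
  -- Step 3: combine
  have hSpos : 0 < T / (mmax - mmin) := by positivity
  calc ((n:ℝ)) * Real.log ((n:ℝ) / (mmax - mmin))
      = (n:ℝ) * (Real.log (n:ℝ) - Real.log (mmax - mmin)) := by
        rw [Real.log_div (ne_of_gt hn0) (ne_of_gt hM)]
    _ = (n:ℝ) * (Real.log (n:ℝ) + (∑ l ∈ P a, s l)/n) - Real.log (mmax-mmin)*n
        - ∑ l ∈ P a, s l := by field_simp; ring
    _ ≤ (n:ℝ) * Real.log T - Real.log (mmax-mmin)*n - ∑ l ∈ P a, s l := by
        have := mul_le_mul_of_nonneg_left hlogT hn0.le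
        linarith
    _ = ∑ j ∈ P a, (Real.log (T / (mmax - mmin)) - s j) := by
        rw [Finset.sum_sub_distrib, Finset.sum_const, hn,
          Real.log_div (ne_of_gt hTpos) (ne_of_gt hM)]
        push_cast
        ring
    _ ≤ ∑ j ∈ P a, (Real.log S - s j) := by
        refine Finset.sum_le_sum fun j _ => ?_
        have := Real.log_le_log hSpos hS
        linarith
end

section
/- (Quantitative upper bound from the proof of Theorem 2.) Suppose in addition that there is a real number c < 1 such that for every anchor a ∈ I: ⟨z(a), z(j)⟩ = 1 for every positive pair j ∈ P_a, and ⟨z(a), z(l)⟩ ≤ c for every l ∈ J with l ≠ a and ρ(l) ≠ ρ(a). Then L ≤ L* + Σ_{a ∈ I} (1/k_a)·(K_a − 1)·log( 1 + (m_max − m_min)·W_a·exp((c − 1)/τ)/(K_a − 1) ), where W_a = Σ_{l ∈ J, ρ(l) ≠ ρ(a)} w(ρ(a), ρ(l)). -/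
open scoped Classical BigOperators RealInnerProductSpace

/-- **Quantitative upper bound from the proof of Theorem 2.**
Suppose there is `c < 1` such that for every anchor `a ∈ I`: `⟪z a, z j⟫ = 1` for every
positive pair `j ∈ P a`, and `⟪z a, z l⟫ ≤ c` for every `l ≠ a` with `ρ l ≠ ρ a`. Then
`L ≤ L* + Σ_{a ∈ I} (1/k_a)·(K_a − 1)·log(1 + (m_max − m_min)·W_a·exp((c − 1)/τ)/(K_a − 1))`,
where `W_a = Σ_{l ∈ J, ρ l ≠ ρ a} w (ρ a) (ρ l)`. -/
theorem supremix_quantitative_upper_bound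
    {J : Type*} [Fintype J] [DecidableEq J] {d : ℕ}
    (I : Finset J) (hI : I.Nonempty)
    (ρ : J → ℝ) (mmin mmax : ℝ) (hm : mmin < mmax)
    (τ : ℝ) (hτ : 0 < τ)
    (z : J → EuclideanSpace ℝ (Fin d)) (hz : ∀ b, ‖z b‖ = 1)
    (w : ℝ → ℝ → ℝ) (hw : ∀ m mbar, w m mbar = (1 + |m - mbar|) / (mmax - mmin))
    (k : J → ℕ) (hk : ∀ a, k a = (I.filter (fun b => ρ b = ρ a)).card)
    (P : J → Finset J) (hP : ∀ a j, j ∈ P a ↔ j ≠ a ∧ ρ j = ρ a)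
    (K : J → ℕ) (hK : ∀ a, K a = (P a).card + 1)
    (hK2 : ∀ a ∈ I, 2 ≤ K a)
    (c : ℝ) (hc : c < 1)
    (hpos : ∀ a ∈ I, ∀ j ∈ P a, ⟪z a, z j⟫ = 1)
    (hneg : ∀ a ∈ I, ∀ l : J, l ≠ a → ρ l ≠ ρ a → ⟪z a, z l⟫ ≤ c)
    (W : J → ℝ)
    (hW : ∀ a, W a = ∑ l ∈ Finset.univ.filter (fun l => ρ l ≠ ρ a), w (ρ a) (ρ l))
    (L : ℝ)
    (hL : L = ∑ a ∈ I, (1 / (k a : ℝ)) *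
      ∑ j ∈ P a,
        (Real.log (∑ l ∈ Finset.univ.erase a,
            w (ρ a) (ρ l) * Real.exp (⟪z a, z l⟫ / τ))
          - ⟪z a, z j⟫ / τ))
    (Lstar : ℝ)
    (hLstar : Lstar = ∑ a ∈ I, (1 / (k a : ℝ)) * ((K a : ℝ) - 1) *
      Real.log (((K a : ℝ) - 1) / (mmax - mmin))) :
    L ≤ Lstar + ∑ a ∈ I, (1 / (k a : ℝ)) * ((K a : ℝ) - 1) *
      Real.log (1 + (mmax - mmin) * W a * Real.exp ((c - 1) / τ) / ((K a : ℝ) - 1)) := by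

  subst hL hLstar
  rw [← Finset.sum_add_distrib]
  apply Finset.sum_le_sum
  intro a ha
  have hM : (0:ℝ) < mmax - mmin := sub_pos.mpr hm
  have hK1 : (1:ℝ) ≤ (K a : ℝ) - 1 := by
    have h2 : (2:ℝ) ≤ (K a : ℝ) := by exact_mod_cast hK2 a ha
    linarith
  have hKc : ((P a).card : ℝ) = (K a : ℝ) - 1 := by
    rw [hK a]; push_cast; ring
  have hwpos : ∀ m m', 0 < w m m' := fun m m' => by
    rw [hw]; exact div_pos (by positivity) hM
  have hWnn : 0 ≤ W a := by
    rw [hW]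
    exact Finset.sum_nonneg fun l _ => (hwpos _ _).le
  set N : Finset J := Finset.univ.filter (fun l => ρ l ≠ ρ a) with hN
  have hsplit : Finset.univ.erase a = P a ∪ N := by
    ext l
    simp only [Finset.mem_erase, Finset.mem_union, hP, hN, Finset.mem_filter,
      Finset.mem_univ, true_and]
    constructor
    · intro hl
      by_cases hρ : ρ l = ρ a
      · exact Or.inl ⟨hl.1, hρ⟩
      · exact Or.inr hρ
    · rintro (⟨h, _⟩ | h)
      · exact ⟨h, trivial⟩
      · exact ⟨fun he => h (by rw [he]), trivial⟩
  have hdisj : Disjoint (P a) N := by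
    rw [Finset.disjoint_left]
    intro l hl hl'
    have h1 := ((hP a l).mp hl).2
    have h2 := (Finset.mem_filter.mp hl').2
    exact h2 h1
  set S : ℝ := ∑ l ∈ Finset.univ.erase a, w (ρ a) (ρ l) * Real.exp (⟪z a, z l⟫ / τ)
    with hS
  have hSP : ∀ j ∈ P a, w (ρ a) (ρ j) * Real.exp (⟪z a, z j⟫ / τ)
      = Real.exp (1 / τ) / (mmax - mmin) := by
    intro j hj
    have hρj : ρ j = ρ a := ((hP a j).mp hj).2
    rw [hpos a ha j hj, hw, hρj, sub_self, abs_zero]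
    ring
  have hsum : S = ((K a : ℝ) - 1) * (Real.exp (1 / τ) / (mmax - mmin))
      + ∑ l ∈ N, w (ρ a) (ρ l) * Real.exp (⟪z a, z l⟫ / τ) := by
    rw [hS, hsplit, Finset.sum_union hdisj, Finset.sum_congr rfl hSP,
      Finset.sum_const, nsmul_eq_mul, hKc]
  have hNle : ∑ l ∈ N, w (ρ a) (ρ l) * Real.exp (⟪z a, z l⟫ / τ)
      ≤ W a * Real.exp (c / τ) := by
    rw [hW, Finset.sum_mul]
    apply Finset.sum_le_sum
    intro l hl
    have hρl : ρ l ≠ ρ a := (Finset.mem_filter.mp hl).2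
    have hla : l ≠ a := fun he => hρl (by rw [he])
    have := hneg a ha l hla hρl
    exact mul_le_mul_of_nonneg_left
      (Real.exp_le_exp.mpr (by gcongr)) (hwpos _ _).le
  have hNnn : 0 ≤ ∑ l ∈ N, w (ρ a) (ρ l) * Real.exp (⟪z a, z l⟫ / τ) :=
    Finset.sum_nonneg fun l _ => (mul_pos (hwpos _ _) (Real.exp_pos _)).le
  have hSpos : 0 < S := by
    rw [hsum]
    have : 0 < ((K a : ℝ) - 1) * (Real.exp (1 / τ) / (mmax - mmin)) :=
      mul_pos (by linarith) (div_pos (Real.exp_pos _) hM)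
    linarith
  set B : ℝ := 1 + (mmax - mmin) * W a * Real.exp ((c - 1) / τ) / ((K a : ℝ) - 1)
    with hB
  have hBpos : 0 < B := by
    have : 0 ≤ (mmax - mmin) * W a * Real.exp ((c - 1) / τ) / ((K a : ℝ) - 1) := by
      apply div_nonneg _ (by linarith)
      positivity
    rw [hB]; linarith
  have hexpc : Real.exp (c / τ) = Real.exp (1 / τ) * Real.exp ((c - 1) / τ) := by
    rw [← Real.exp_add]
    congr 1
    field_simp
    ring
  have hST : S ≤ (((K a : ℝ) - 1) / (mmax - mmin)) * Real.exp (1 / τ) * B := by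
    have hfact : (((K a : ℝ) - 1) / (mmax - mmin)) * Real.exp (1 / τ) * B
        = ((K a : ℝ) - 1) * (Real.exp (1 / τ) / (mmax - mmin))
          + W a * Real.exp (c / τ) := by
      rw [hB, hexpc]
      have hK0 : ((K a : ℝ) - 1) ≠ 0 := by linarith
      field_simp
    rw [hfact, hsum]
    linarith
  have hlogS : Real.log S ≤ Real.log (((K a : ℝ) - 1) / (mmax - mmin))
      + 1 / τ + Real.log B := by
    calc Real.log S ≤ Real.log ((((K a : ℝ) - 1) / (mmax - mmin)) * Real.exp (1 / τ) * B) :=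
          Real.log_le_log hSpos hST
      _ = Real.log (((K a : ℝ) - 1) / (mmax - mmin)) + 1 / τ + Real.log B := by
          rw [Real.log_mul (by positivity) hBpos.ne',
            Real.log_mul (by positivity) (Real.exp_pos _).ne', Real.log_exp]
  have hinner : ∑ j ∈ P a, (Real.log S - ⟪z a, z j⟫ / τ)
      = ((K a : ℝ) - 1) * (Real.log S - 1 / τ) := by
    rw [Finset.sum_congr rfl (fun j hj => by rw [hpos a ha j hj]),
      Finset.sum_const, nsmul_eq_mul, hKc]
  rw [hinner]
  have hknn : 0 ≤ 1 / (k a : ℝ) := by positivity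
  have hfin : Real.log S - 1 / τ
      ≤ Real.log (((K a : ℝ) - 1) / (mmax - mmin)) + Real.log B := by linarith
  calc (1 / (k a : ℝ)) * (((K a : ℝ) - 1) * (Real.log S - 1 / τ))
      ≤ (1 / (k a : ℝ)) * (((K a : ℝ) - 1) *
        (Real.log (((K a : ℝ) - 1) / (mmax - mmin)) + Real.log B)) := by
        apply mul_le_mul_of_nonneg_left _ hknn
        exact mul_le_mul_of_nonneg_left hfin (by linarith)
    _ = 1 / (k a : ℝ) * ((K a : ℝ) - 1) *
          Real.log (((K a : ℝ) - 1) / (mmax - mmin)) +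
        1 / (k a : ℝ) * ((K a : ℝ) - 1) * Real.log B := by ring
end

section
/- (Small-temperature attainment of the lower bound, from the proof of Theorem 2.) Suppose the embeddings z are fixed independently of τ and there is a real number c < 1 such that for every anchor a ∈ I: ⟨z(a), z(j)⟩ = 1 for every positive pair j ∈ P_a, and ⟨z(a), z(l)⟩ ≤ c for every l ∈ J with l ≠ a and ρ(l) ≠ ρ(a). Writing L(τ) for the SupReMix loss at temperature τ, one has: (i) L(τ) → L* as τ → 0⁺, and (ii) the infimum of L(τ) over all τ > 0 equals L*. -/
open scoped Classical BigOperators RealInnerProductSpace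

/-- **Small-temperature attainment of the lower bound (from the proof of Theorem 2).**
Suppose the unit-norm embeddings `z` are fixed and there is `c < 1` such that for every anchor
`a ∈ I`: `⟪z a, z j⟫ = 1` for every positive pair `j ∈ P a`, and `⟪z a, z l⟫ ≤ c` for every
`l ≠ a` with `ρ l ≠ ρ a`. Writing `L τ` for the SupReMix loss at temperature `τ`, one has:
(i) `L τ → L*` as `τ → 0⁺`, and (ii) the infimum of `L τ` over all `τ > 0` equals `L*`. -/
theorem supremix_small_temperature_infimum
    {J : Type*} [Fintype J] [DecidableEq J] {d : ℕ}
    (I : Finset J) (hI : I.Nonempty)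
    (ρ : J → ℝ) (mmin mmax : ℝ) (hm : mmin < mmax)
    (z : J → EuclideanSpace ℝ (Fin d)) (hz : ∀ b, ‖z b‖ = 1)
    (w : ℝ → ℝ → ℝ) (hw : ∀ m mbar, w m mbar = (1 + |m - mbar|) / (mmax - mmin))
    (k : J → ℕ) (hk : ∀ a, k a = (I.filter (fun b => ρ b = ρ a)).card)
    (P : J → Finset J) (hP : ∀ a j, j ∈ P a ↔ j ≠ a ∧ ρ j = ρ a)
    (K : J → ℕ) (hK : ∀ a, K a = (P a).card + 1)
    (hK2 : ∀ a ∈ I, 2 ≤ K a)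
    (c : ℝ) (hc : c < 1)
    (hpos : ∀ a ∈ I, ∀ j ∈ P a, ⟪z a, z j⟫ = 1)
    (hneg : ∀ a ∈ I, ∀ l : J, l ≠ a → ρ l ≠ ρ a → ⟪z a, z l⟫ ≤ c)
    (L : ℝ → ℝ)
    (hL : ∀ τ : ℝ, 0 < τ → L τ = ∑ a ∈ I, (1 / (k a : ℝ)) *
      ∑ j ∈ P a,
        (Real.log (∑ l ∈ Finset.univ.erase a,
            w (ρ a) (ρ l) * Real.exp (⟪z a, z l⟫ / τ))
          - ⟪z a, z j⟫ / τ))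
    (Lstar : ℝ)
    (hLstar : Lstar = ∑ a ∈ I, (1 / (k a : ℝ)) * ((K a : ℝ) - 1) *
      Real.log (((K a : ℝ) - 1) / (mmax - mmin))) :
    Filter.Tendsto L (nhdsWithin 0 (Set.Ioi 0)) (nhds Lstar) ∧
    IsGLB (L '' Set.Ioi 0) Lstar := by
  have hmm : (0:ℝ) < mmax - mmin := sub_pos.mpr hm
  have hwpos : ∀ m m' : ℝ, 0 < w m m' := by
    intro m m'; rw [hw]; positivity
  -- notation
  set D : J → ℝ := fun a => ((K a : ℝ) - 1) / (mmax - mmin) with hD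
  set N : J → Finset J := fun a =>
    (Finset.univ.erase a).filter (fun l => ¬ ρ l = ρ a) with hN
  set h : J → ℝ → ℝ := fun a τ => ∑ l ∈ N a, w (ρ a) (ρ l) *
    Real.exp ((⟪z a, z l⟫ - 1) / τ) with hh
  have hKpos : ∀ a ∈ I, (0:ℝ) < (K a : ℝ) - 1 := by
    intro a ha
    have := hK2 a ha
    have : (2:ℝ) ≤ (K a : ℝ) := by exact_mod_cast this
    linarith
  have hDpos : ∀ a ∈ I, 0 < D a := fun a ha => div_pos (hKpos a ha) hmm
  have hPsub : ∀ a : J, P a = (Finset.univ.erase a).filter (fun l => ρ l = ρ a) := by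
    intro a; ext l
    simp [hP, Finset.mem_erase, and_comm]
  -- key : for a ∈ I and τ > 0, the log term decomposition
  have hsumP : ∀ a ∈ I, ∀ τ : ℝ, 0 < τ →
      ∑ l ∈ P a, w (ρ a) (ρ l) * Real.exp ((⟪z a, z l⟫ - 1) / τ) = D a := by
    intro a ha τ hτ
    have : ∀ l ∈ P a, w (ρ a) (ρ l) * Real.exp ((⟪z a, z l⟫ - 1) / τ)
        = 1 / (mmax - mmin) := by
      intro l hl
      have hρ : ρ l = ρ a := ((hP a l).mp hl).2
      have hx : ⟪z a, z l⟫ = 1 := hpos a ha l hl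
      rw [hw, hρ, hx]
      simp
    rw [Finset.sum_congr rfl this, Finset.sum_const, nsmul_eq_mul, hD]
    have : ((P a).card : ℝ) = (K a : ℝ) - 1 := by
      rw [hK]; push_cast; ring
    rw [this]; ring
  have hgdecomp : ∀ a ∈ I, ∀ τ : ℝ, 0 < τ →
      ∑ l ∈ Finset.univ.erase a, w (ρ a) (ρ l) * Real.exp ((⟪z a, z l⟫ - 1) / τ)
        = D a + h a τ := by
    intro a ha τ hτ
    rw [← Finset.sum_filter_add_sum_filter_not (Finset.univ.erase a)
      (fun l => ρ l = ρ a), ← hPsub, hsumP a ha τ hτ]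
  have hhnonneg : ∀ a : J, ∀ τ : ℝ, 0 ≤ h a τ := by
    intro a τ
    apply Finset.sum_nonneg
    intro l _
    exact mul_nonneg (hwpos _ _).le (Real.exp_pos _).le
  -- L τ in nicer form
  have hLform : ∀ τ : ℝ, 0 < τ →
      L τ = ∑ a ∈ I, (1 / (k a : ℝ)) * ((K a : ℝ) - 1) * Real.log (D a + h a τ) := by
    intro τ hτ
    rw [hL τ hτ]
    apply Finset.sum_congr rfl
    intro a ha
    have hSpos : 0 < ∑ l ∈ Finset.univ.erase a,
        w (ρ a) (ρ l) * Real.exp (⟪z a, z l⟫ / τ) := by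
      have hPne : (P a).Nonempty := by
        rw [← Finset.card_pos]
        have h1 := hK2 a ha
        have h2 := hK a
        omega
      obtain ⟨j, hj⟩ := hPne
      have hjmem : j ∈ Finset.univ.erase a := by
        rw [hPsub] at hj
        exact Finset.mem_of_mem_filter j hj
      apply Finset.sum_pos' (fun l _ => mul_nonneg (hwpos _ _).le (Real.exp_pos _).le)
      exact ⟨j, hjmem, mul_pos (hwpos _ _) (Real.exp_pos _)⟩
    have hlog : Real.log (∑ l ∈ Finset.univ.erase a,
        w (ρ a) (ρ l) * Real.exp (⟪z a, z l⟫ / τ)) - 1 / τ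
        = Real.log (D a + h a τ) := by
      rw [← hgdecomp a ha τ hτ]
      have : ∀ l : J, w (ρ a) (ρ l) * Real.exp ((⟪z a, z l⟫ - 1) / τ)
          = (w (ρ a) (ρ l) * Real.exp (⟪z a, z l⟫ / τ)) * Real.exp (-(1/τ)) := by
        intro l
        rw [mul_assoc, ← Real.exp_add]
        ring_nf
      simp_rw [this, ← Finset.sum_mul]
      rw [Real.log_mul (ne_of_gt hSpos) (Real.exp_ne_zero _), Real.log_exp]
      ring
    have hinner : ∀ j ∈ P a,
        Real.log (∑ l ∈ Finset.univ.erase a,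
          w (ρ a) (ρ l) * Real.exp (⟪z a, z l⟫ / τ)) - ⟪z a, z j⟫ / τ
        = Real.log (D a + h a τ) := by
      intro j hj
      rw [hpos a ha j hj, hlog]
    rw [Finset.sum_congr rfl hinner, Finset.sum_const, nsmul_eq_mul]
    have : ((P a).card : ℝ) = (K a : ℝ) - 1 := by rw [hK]; push_cast; ring
    rw [this]; ring
  -- h a τ → 0
  have hhtends : ∀ a ∈ I, Filter.Tendsto (h a) (nhdsWithin 0 (Set.Ioi 0)) (nhds 0) := by
    intro a ha
    have : (0:ℝ) = ∑ l ∈ N a, (0:ℝ) := by simp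
    rw [this]
    apply tendsto_finset_sum
    intro l hl
    have hlne : l ≠ a ∧ ¬ ρ l = ρ a := by
      simp only [hN, Finset.mem_filter, Finset.mem_erase, Finset.mem_univ, true_and] at hl
      exact ⟨hl.1.1, hl.2⟩
    have hx : ⟪z a, z l⟫ ≤ c := hneg a ha l hlne.1 hlne.2
    have hxneg : ⟪z a, z l⟫ - 1 < 0 := by linarith
    have hdiv : Filter.Tendsto (fun τ : ℝ => (⟪z a, z l⟫ - 1) / τ)
        (nhdsWithin 0 (Set.Ioi 0)) Filter.atBot := by
      simp_rw [div_eq_mul_inv]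
      exact (Filter.tendsto_const_mul_atBot_of_neg hxneg).mpr tendsto_inv_nhdsGT_zero
    have hexp := Real.tendsto_exp_atBot.comp hdiv
    have := hexp.const_mul (w (ρ a) (ρ l))
    simpa using this
  -- tendsto part
  have htendsto : Filter.Tendsto L (nhdsWithin 0 (Set.Ioi 0)) (nhds Lstar) := by
    have hF : Filter.Tendsto (fun τ => ∑ a ∈ I, (1 / (k a : ℝ)) * ((K a : ℝ) - 1) *
        Real.log (D a + h a τ)) (nhdsWithin 0 (Set.Ioi 0)) (nhds Lstar) := by
      rw [hLstar]
      apply tendsto_finset_sum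
      intro a ha
      apply Filter.Tendsto.const_mul
      have harg : Filter.Tendsto (fun τ => D a + h a τ) (nhdsWithin 0 (Set.Ioi 0))
          (nhds (D a)) := by
        have := (hhtends a ha).const_add (D a)
        simpa using this
      exact ((Real.continuousAt_log (ne_of_gt (hDpos a ha))).tendsto.comp harg)
    apply hF.congr'
    filter_upwards [self_mem_nhdsWithin] with τ hτ
    exact (hLform τ hτ).symm
  refine ⟨htendsto, ?_, ?_⟩
  · -- lower bound
    rintro x ⟨τ, hτ, rfl⟩
    rw [hLform τ hτ, hLstar]
    apply Finset.sum_le_sum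
    intro a ha
    apply mul_le_mul_of_nonneg_left
    · apply Real.log_le_log (hDpos a ha)
      linarith [hhnonneg a τ]
    · have : (0:ℝ) < (K a : ℝ) - 1 := hKpos a ha
      positivity
  · -- greatest lower bound
    intro b hb
    refine ge_of_tendsto htendsto ?_
    filter_upwards [self_mem_nhdsWithin] with τ hτ
    exact hb ⟨τ, hτ, rfl⟩
end

section
/- (Theorem 2 — L* is the infimum of the SupReMix loss.) Let d ≥ 2. Then the infimum of the SupReMix loss L(z, τ), taken over all embeddings z : J → ℝ^d with ‖z(b)‖ = 1 for every b ∈ J and all temperatures τ > 0, equals L*. In particular L(z, τ) ≥ L* for every such (z, τ), and for every ε > 0 there exist unit-norm embeddings z and a temperature τ > 0 with L(z, τ) < L* + ε. -/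
open scoped Classical BigOperators RealInnerProductSpace

/-- **Theorem 2 (L* is the infimum of the SupReMix loss).**
Let `d ≥ 2`. The infimum of the SupReMix loss `L z τ`, taken over all embeddings
`z : J → ℝ^d` with `‖z b‖ = 1` for all `b ∈ J` and all temperatures `τ > 0`, equals `L*`.
In particular `L z τ ≥ L*` for every such `(z, τ)`, and for every `ε > 0` there exist
unit-norm embeddings `z` and a temperature `τ > 0` with `L z τ < L* + ε`. -/
theorem supremix_infimum
    {J : Type*} [Fintype J] [DecidableEq J] {d : ℕ} (hd : 2 ≤ d)
    (I : Finset J) (hI : I.Nonempty)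
    (ρ : J → ℝ) (mmin mmax : ℝ) (hm : mmin < mmax)
    (w : ℝ → ℝ → ℝ) (hw : ∀ m mbar, w m mbar = (1 + |m - mbar|) / (mmax - mmin))
    (k : J → ℕ) (hk : ∀ a, k a = (I.filter (fun b => ρ b = ρ a)).card)
    (P : J → Finset J) (hP : ∀ a j, j ∈ P a ↔ j ≠ a ∧ ρ j = ρ a)
    (K : J → ℕ) (hK : ∀ a, K a = (P a).card + 1)
    (hK2 : ∀ a ∈ I, 2 ≤ K a)
    (L : (J → EuclideanSpace ℝ (Fin d)) → ℝ → ℝ)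
    (hL : ∀ (z : J → EuclideanSpace ℝ (Fin d)) (τ : ℝ),
      L z τ = ∑ a ∈ I, (1 / (k a : ℝ)) *
        ∑ j ∈ P a,
          (Real.log (∑ l ∈ Finset.univ.erase a,
              w (ρ a) (ρ l) * Real.exp (⟪z a, z l⟫ / τ))
            - ⟪z a, z j⟫ / τ))
    (Lstar : ℝ)
    (hLstar : Lstar = ∑ a ∈ I, (1 / (k a : ℝ)) * ((K a : ℝ) - 1) *
      Real.log (((K a : ℝ) - 1) / (mmax - mmin))) :
    IsGLB {x : ℝ | ∃ (z : J → EuclideanSpace ℝ (Fin d)) (τ : ℝ),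
        (∀ b, ‖z b‖ = 1) ∧ 0 < τ ∧ L z τ = x} Lstar ∧
    (∀ (z : J → EuclideanSpace ℝ (Fin d)) (τ : ℝ),
      (∀ b, ‖z b‖ = 1) → 0 < τ → Lstar ≤ L z τ) ∧
    (∀ ε > (0 : ℝ), ∃ (z : J → EuclideanSpace ℝ (Fin d)) (τ : ℝ),
      (∀ b, ‖z b‖ = 1) ∧ 0 < τ ∧ L z τ < Lstar + ε) := by
  have hM : (0:ℝ) < mmax - mmin := sub_pos.mpr hm
  obtain ⟨a0, ha0I⟩ := hI
  haveI : Nonempty J := ⟨a0⟩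
  have hPne : ∀ a ∈ I, (P a).Nonempty := by
    intro a ha
    have h2 := hK2 a ha
    rw [hK a] at h2
    exact Finset.card_pos.mp (by omega)
  have hPsub : ∀ a : J, P a ⊆ Finset.univ.erase a := by
    intro a j hj
    exact Finset.mem_erase.mpr ⟨((hP a j).mp hj).1, Finset.mem_univ j⟩
  have hwpos : ∀ m mbar, 0 < w m mbar := by
    intro m mbar; rw [hw]; positivity
  have hKcast : ∀ a : J, (K a : ℝ) - 1 = ((P a).card : ℝ) := by
    intro a; rw [hK a]; push_cast; ring
  -- PART 2: the lower bound
  have lower : ∀ (z : J → EuclideanSpace ℝ (Fin d)) (τ : ℝ),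
      (∀ b, ‖z b‖ = 1) → 0 < τ → Lstar ≤ L z τ := by
    intro z τ hz hτ
    rw [hL, hLstar]
    refine Finset.sum_le_sum ?_
    intro a ha
    rw [mul_assoc, hKcast a]
    have hkpos : (0:ℝ) ≤ 1 / (k a : ℝ) := by positivity
    refine mul_le_mul_of_nonneg_left ?_ hkpos
    set n : ℕ := (P a).card with hn
    have hnR : (0:ℝ) < n := by
      exact_mod_cast Finset.card_pos.mpr (hPne a ha)
    have hne : (n:ℝ) ≠ 0 := ne_of_gt hnR
    set s : J → ℝ := fun l => ⟪z a, z l⟫ / τ with hs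
    set S : ℝ := ∑ l ∈ P a, s l with hS
    set A : ℝ := ∑ l ∈ Finset.univ.erase a, w (ρ a) (ρ l) * Real.exp (s l) with hA
    have hJ : Real.exp (S / n) ≤ (1 / (n:ℝ)) * ∑ l ∈ P a, Real.exp (s l) := by
      have hmain := convexOn_exp.map_sum_le (t := P a) (w := fun _ => (1:ℝ)/n) (p := s)
        (fun i _ => by positivity)
        (by rw [Finset.sum_const, ← hn, nsmul_eq_mul]; field_simp)
        (fun i _ => Set.mem_univ _)
      simp only [smul_eq_mul] at hmain
      calc Real.exp (S/n) = Real.exp (∑ l ∈ P a, (1/(n:ℝ)) * s l) := by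
              rw [← Finset.mul_sum, ← hS, one_div, inv_mul_eq_div]
        _ ≤ ∑ l ∈ P a, (1/(n:ℝ)) * Real.exp (s l) := hmain
        _ = (1/(n:ℝ)) * ∑ l ∈ P a, Real.exp (s l) := by rw [Finset.mul_sum]
    have hA1 : ((n:ℝ) / (mmax - mmin)) * Real.exp (S / n) ≤ A := by
      have e1 : ((n:ℝ)/(mmax-mmin)) * Real.exp (S/n)
          ≤ ((n:ℝ)/(mmax-mmin)) * ((1/(n:ℝ)) * ∑ l ∈ P a, Real.exp (s l)) :=
        mul_le_mul_of_nonneg_left hJ (by positivity)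
      have e2 : ((n:ℝ)/(mmax-mmin)) * ((1/(n:ℝ)) * ∑ l ∈ P a, Real.exp (s l))
          = ∑ l ∈ P a, w (ρ a) (ρ l) * Real.exp (s l) := by
        rw [Finset.mul_sum, Finset.mul_sum]
        refine Finset.sum_congr rfl ?_
        intro j hj
        rw [hw]
        have hj2 : ρ j = ρ a := ((hP a j).mp hj).2
        rw [hj2]
        rw [sub_self, abs_zero]
        field_simp
        ring
      have e3 : ∑ l ∈ P a, w (ρ a) (ρ l) * Real.exp (s l) ≤ A := by
        refine Finset.sum_le_sum_of_subset_of_nonneg (hPsub a) ?_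
        intro i _ _
        exact le_of_lt (mul_pos (hwpos _ _) (Real.exp_pos _))
      linarith
    have hApos : 0 < A := lt_of_lt_of_le (by positivity) hA1
    have hlog : Real.log ((n:ℝ)/(mmax-mmin)) + S / n ≤ Real.log A := by
      have hll := Real.log_le_log (by positivity) hA1
      rwa [Real.log_mul (by positivity) (Real.exp_ne_zero _), Real.log_exp] at hll
    have hsum : ∑ j ∈ P a, (Real.log A - s j) = (n:ℝ) * Real.log A - S := by
      rw [Finset.sum_sub_distrib, Finset.sum_const, ← hn, nsmul_eq_mul, hS]
    have hcancel : (n:ℝ) * (S / n) = S := by field_simp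
    calc (n:ℝ) * Real.log ((n:ℝ)/(mmax - mmin))
        = (n:ℝ) * (Real.log ((n:ℝ)/(mmax-mmin)) + S/n) - S := by
          rw [mul_add, hcancel]; ring
      _ ≤ (n:ℝ) * Real.log A - S := by
          have := mul_le_mul_of_nonneg_left hlog hnR.le
          linarith
      _ = ∑ j ∈ P a, (Real.log A - s j) := hsum.symm
  -- PART 3: the construction of a near-optimal embedding
  have h0d : 0 < d := by omega
  have h1d : 1 < d := by omega
  set D : ℝ := Finset.univ.sup' Finset.univ_nonempty (fun p : J × J => |ρ p.1 - ρ p.2|) with hD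
  have hD0 : 0 ≤ D := by
    have h : |ρ a0 - ρ a0| ≤ D :=
      Finset.le_sup' (f := fun p : J × J => |ρ p.1 - ρ p.2|) (Finset.mem_univ (a0, a0))
    rwa [sub_self, abs_zero] at h
  set θ : J → ℝ := fun b => (1 + D)⁻¹ * ρ b with hθ
  have hθsub : ∀ a b : J, |θ a - θ b| ≤ 1 := by
    intro a b
    have h1 : |θ a - θ b| = (1+D)⁻¹ * |ρ a - ρ b| := by
      rw [hθ]
      rw [← mul_sub, abs_mul, abs_of_pos (show (0:ℝ) < (1+D)⁻¹ by positivity)]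
    have h2 : |ρ a - ρ b| ≤ D :=
      Finset.le_sup' (f := fun p : J × J => |ρ p.1 - ρ p.2|) (Finset.mem_univ (a, b))
    rw [h1]
    calc (1+D)⁻¹ * |ρ a - ρ b| ≤ (1+D)⁻¹ * (1+D) := by
          refine mul_le_mul_of_nonneg_left ?_ (by positivity)
          linarith
      _ = 1 := by field_simp
  set i0 : Fin d := ⟨0, h0d⟩ with hi0
  set i1 : Fin d := ⟨1, h1d⟩ with hi1
  have hi01 : i1 ≠ i0 := by
    simp [hi0, hi1, Fin.ext_iff]
  set z : J → EuclideanSpace ℝ (Fin d) := fun b =>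
    Real.cos (θ b) • EuclideanSpace.single i0 (1:ℝ)
      + Real.sin (θ b) • EuclideanSpace.single i1 (1:ℝ) with hzdef
  have hinner : ∀ a b : J, ⟪z a, z b⟫ = Real.cos (θ a - θ b) := by
    intro a b
    rw [hzdef]
    simp only [inner_add_left, inner_add_right, real_inner_smul_left, real_inner_smul_right,
      EuclideanSpace.inner_single_left, EuclideanSpace.single_apply, map_one, one_mul,
      hi01, if_true, if_false, ite_true, ite_false, if_neg hi01, if_neg (Ne.symm hi01), if_pos rfl]
    rw [Real.cos_sub]
    ring
  have hnorm : ∀ b, ‖z b‖ = 1 := by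
    intro b
    have h1 : ⟪z b, z b⟫ = 1 := by rw [hinner]; simp
    have h2 : ‖z b‖ ^ 2 = 1 := by rw [← real_inner_self_eq_norm_sq]; exact h1
    nlinarith [norm_nonneg (z b)]
  have hsame : ∀ a b : J, ρ a = ρ b → ⟪z a, z b⟫ = 1 := by
    intro a b hab
    rw [hinner]
    have : θ a - θ b = 0 := by rw [hθ]; simp [hab]
    rw [this, Real.cos_zero]
  have hlt1 : ∀ a b : J, ρ a ≠ ρ b → ⟪z a, z b⟫ < 1 := by
    intro a b hab
    rw [hinner]
    have hx0 : θ a - θ b ≠ 0 := by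
      rw [hθ]
      simp only
      rw [← mul_sub]
      refine mul_ne_zero (by positivity) ?_
      exact sub_ne_zero.mpr hab
    have habs := hθsub a b
    have hπ : (1:ℝ) < 2 * Real.pi := by nlinarith [Real.pi_gt_three]
    obtain ⟨hl, hr⟩ := abs_le.mp habs
    refine lt_of_le_of_ne (Real.cos_le_one _) ?_
    intro hcos
    exact hx0 ((Real.cos_eq_one_iff_of_lt_of_lt (by linarith) (by linarith)).mp hcos)
  set F : J → ℕ → ℝ := fun a n => ∑ l ∈ Finset.univ.erase a,
      w (ρ a) (ρ l) * Real.exp ((⟪z a, z l⟫ - 1) * ((n:ℝ)+1)) with hF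
  have hFpos : ∀ a ∈ I, ∀ n : ℕ, 0 < F a n := by
    intro a ha n
    refine Finset.sum_pos (fun l _ => mul_pos (hwpos _ _) (Real.exp_pos _)) ?_
    exact (hPne a ha).mono (hPsub a)
  have hLF : ∀ n : ℕ, L z (((n:ℝ)+1)⁻¹)
      = ∑ a ∈ I, (1/(k a:ℝ)) * (((P a).card : ℝ) * Real.log (F a n)) := by
    intro n
    rw [hL]
    refine Finset.sum_congr rfl ?_
    intro a ha
    congr 1
    have hexp : ∑ l ∈ Finset.univ.erase a, w (ρ a) (ρ l) * Real.exp (⟪z a, z l⟫ / ((n:ℝ)+1)⁻¹)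
        = F a n * Real.exp ((n:ℝ)+1) := by
      rw [hF]
      rw [Finset.sum_mul]
      refine Finset.sum_congr rfl ?_
      intro l _
      rw [mul_assoc, ← Real.exp_add, div_inv_eq_mul]
      ring_nf
    have hlogv : Real.log (F a n * Real.exp ((n:ℝ)+1)) = Real.log (F a n) + ((n:ℝ)+1) := by
      rw [Real.log_mul (ne_of_gt (hFpos a ha n)) (Real.exp_ne_zero _), Real.log_exp]
    simp only [hexp, hlogv]
    have hsum : ∀ j ∈ P a,
        Real.log (F a n) + ((n:ℝ)+1) - ⟪z a, z j⟫ / ((n:ℝ)+1)⁻¹ = Real.log (F a n) := by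
      intro j hj
      have h1 : ⟪z a, z j⟫ = 1 := hsame a j (((hP a j).mp hj).2).symm
      rw [h1, div_inv_eq_mul, one_mul]
      ring
    rw [Finset.sum_congr rfl hsum, Finset.sum_const, nsmul_eq_mul]
  have hFlim : ∀ a ∈ I, Filter.Tendsto (fun n : ℕ => F a n) Filter.atTop
      (nhds (((P a).card : ℝ) / (mmax - mmin))) := by
    intro a ha
    have hval : (((P a).card : ℝ) / (mmax - mmin))
        = ∑ l ∈ Finset.univ.erase a, (if ρ l = ρ a then (mmax - mmin)⁻¹ else 0) := by
      rw [← Finset.sum_filter]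
      have hfilter : Finset.filter (fun l => ρ l = ρ a) (Finset.univ.erase a) = P a := by
        ext j
        rw [Finset.mem_filter, Finset.mem_erase, hP]
        constructor
        · rintro ⟨⟨h1, _⟩, h2⟩; exact ⟨h1, h2⟩
        · rintro ⟨h1, h2⟩; exact ⟨⟨h1, Finset.mem_univ j⟩, h2⟩
      rw [hfilter, Finset.sum_const, nsmul_eq_mul, div_eq_mul_inv]
    rw [hval, hF]
    refine tendsto_finset_sum _ ?_
    intro l _
    by_cases hρ : ρ l = ρ a
    · rw [if_pos hρ]
      have h1 : ⟪z a, z l⟫ = 1 := hsame a l hρ.symm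
      have heq : (fun n : ℕ => w (ρ a) (ρ l) * Real.exp ((⟪z a, z l⟫ - 1) * ((n:ℝ)+1)))
          = fun _ : ℕ => (mmax-mmin)⁻¹ := by
        funext m
        rw [h1, sub_self, zero_mul, Real.exp_zero, mul_one, hw, hρ, sub_self, abs_zero]
        rw [add_zero, one_div]
      rw [heq]
      exact tendsto_const_nhds
    · rw [if_neg hρ]
      have h1 : ⟪z a, z l⟫ < 1 := hlt1 a l (fun h => hρ h.symm)
      have h2 : Filter.Tendsto (fun m : ℕ => (⟪z a, z l⟫ - 1) * ((m:ℝ)+1))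
          Filter.atTop Filter.atBot := by
        refine (Filter.tendsto_const_mul_atBot_of_neg (by linarith)).mpr ?_
        exact Filter.tendsto_atTop_add_const_right _ 1 tendsto_natCast_atTop_atTop
      have h3 := Real.tendsto_exp_atBot.comp h2
      have h4 := h3.const_mul (w (ρ a) (ρ l))
      simp only [mul_zero] at h4
      exact h4
  have hLlim : Filter.Tendsto (fun n : ℕ => L z (((n:ℝ)+1)⁻¹)) Filter.atTop (nhds Lstar) := by
    have h1 : Filter.Tendsto
        (fun n : ℕ => ∑ a ∈ I, (1/(k a:ℝ)) * (((P a).card:ℝ) * Real.log (F a n)))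
        Filter.atTop
        (nhds (∑ a ∈ I, (1/(k a:ℝ)) *
          (((P a).card:ℝ) * Real.log (((P a).card:ℝ)/(mmax - mmin))))) := by
      refine tendsto_finset_sum _ ?_
      intro a ha
      have hcardpos : (0:ℝ) < ((P a).card : ℝ) := by
        exact_mod_cast Finset.card_pos.mpr (hPne a ha)
      have hlim := hFlim a ha
      have hlog := (Real.continuousAt_log (by positivity)).tendsto.comp hlim
      exact ((hlog.const_mul (((P a).card : ℝ))).const_mul (1/(k a:ℝ)))
    have h2 : Lstar = ∑ a ∈ I, (1/(k a:ℝ)) *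
        (((P a).card:ℝ) * Real.log (((P a).card:ℝ)/(mmax-mmin))) := by
      rw [hLstar]
      refine Finset.sum_congr rfl ?_
      intro a ha
      rw [mul_assoc, hKcast a]
    rw [h2]
    exact h1.congr (fun n => (hLF n).symm)
  have approx : ∀ ε > (0:ℝ), ∃ (z' : J → EuclideanSpace ℝ (Fin d)) (τ : ℝ),
      (∀ b, ‖z' b‖ = 1) ∧ 0 < τ ∧ L z' τ < Lstar + ε := by
    intro ε hε
    have hev := hLlim.eventually_lt_const (show Lstar < Lstar + ε by linarith)
    obtain ⟨n, hn⟩ := hev.exists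
    exact ⟨z, ((n:ℝ)+1)⁻¹, hnorm, by positivity, hn⟩
  refine ⟨⟨?_, ?_⟩, lower, approx⟩
  · rintro x ⟨z', τ, hz', hτ, rfl⟩
    exact lower z' τ hz' hτ
  · intro b hb
    refine le_of_forall_pos_le_add ?_
    intro ε hε
    obtain ⟨z', τ, hz', hτ, hlt⟩ := approx ε hε
    exact le_trans (hb ⟨z', τ, hz', hτ, rfl⟩) hlt.le
end
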